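/- arXiv:2102.07770 — 3 statements merged into one kernel-verified Lean document; each statement's English description precedes it below -/
import Mathlib

section
/- Under the stated positivity and integrability assumptions, the quantity F(ψ,φ*) := −∬ p̃ᵣ(θ) q_ψ(x|θ) log( p(θ) p_sim(x|θ) / p̃ᵣ(x) ) dν(x) dμ(θ) decomposes as F(ψ,φ*) = D_KL( p̃ᵣ(θ) q_ψ(x|θ) ‖ p̃ᵣ(θ) p_sim(x|θ) ) − D_KL( p̃ᵣ(θ) q_ψ(x|θ) ‖ p̃ᵣ(θ) q̃_ψ(x) ) − D_KL( q̃_ψ(x) ‖ p̃ᵣ(x) ) − ∫ p̃ᵣ(θ) log p(θ) dμ(θ). -/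
open MeasureTheory Real

/-- Decomposition of the neural posterior regularization proxy
`F(ψ,φ*) = −∬ p̃ᵣ(θ) q_ψ(x|θ) log (p(θ) p_sim(x|θ) / p̃ᵣ(x))` as
`F(ψ,φ*) = D_KL(p̃ᵣ q_ψ ‖ p̃ᵣ p_sim) − D_KL(p̃ᵣ q_ψ ‖ p̃ᵣ q̃_ψ) − D_KL(q̃_ψ ‖ p̃ᵣ(x))
− ∫ p̃ᵣ(θ) log p(θ) dμ(θ)`. -/
theorem npr_proxy_decomposition
    {Θ X : Type*} [MeasurableSpace Θ] [MeasurableSpace X]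
    (μ : Measure Θ) (ν : Measure X) [SigmaFinite μ] [SigmaFinite ν]
    (ptr p : Θ → ℝ) (psim qψ : Θ → X → ℝ) (tq tp : X → ℝ)
    -- measurability
    (hptr_meas : Measurable ptr) (hp_meas : Measurable p)
    (hpsim_meas : Measurable (Function.uncurry psim))
    (hqψ_meas : Measurable (Function.uncurry qψ))
    -- strict positivity
    (hptr_pos : ∀ θ, 0 < ptr θ) (hp_pos : ∀ θ, 0 < p θ)
    (hpsim_pos : ∀ θ x, 0 < psim θ x) (hqψ_pos : ∀ θ x, 0 < qψ θ x)
    -- probability densities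
    (hptr_den : ∫ θ, ptr θ ∂μ = 1) (hp_den : ∫ θ, p θ ∂μ = 1)
    (hpsim_den : ∀ θ, ∫ x, psim θ x ∂ν = 1)
    (hqψ_den : ∀ θ, ∫ x, qψ θ x ∂ν = 1)
    -- marginals  q̃_ψ(x) = ∫ p̃ᵣ(θ) q_ψ(x|θ) dμ(θ)  and  p̃ᵣ(x) = ∫ p̃ᵣ(θ) p_sim(x|θ) dμ(θ)
    (htq_int : ∀ x, Integrable (fun θ => ptr θ * qψ θ x) μ)
    (htp_int : ∀ x, Integrable (fun θ => ptr θ * psim θ x) μ)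
    (htq : ∀ x, tq x = ∫ θ, ptr θ * qψ θ x ∂μ)
    (htp : ∀ x, tp x = ∫ θ, ptr θ * psim θ x ∂μ)
    -- finiteness of all integrals appearing
    (hInt₀ : Integrable (fun z : Θ × X => ptr z.1 * qψ z.1 z.2) (μ.prod ν))
    (hInt₁ : Integrable (fun z : Θ × X =>
      ptr z.1 * qψ z.1 z.2 * Real.log (psim z.1 z.2)) (μ.prod ν))
    (hInt₂ : Integrable (fun z : Θ × X =>
      ptr z.1 * qψ z.1 z.2 * Real.log (qψ z.1 z.2)) (μ.prod ν))
    (hInt₃ : Integrable (fun z : Θ × X =>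
      ptr z.1 * qψ z.1 z.2 * Real.log (tq z.2)) (μ.prod ν))
    (hInt₄ : Integrable (fun z : Θ × X =>
      ptr z.1 * qψ z.1 z.2 * Real.log (tp z.2)) (μ.prod ν))
    (hInt₅ : Integrable (fun z : Θ × X =>
      ptr z.1 * qψ z.1 z.2 * Real.log (p z.1)) (μ.prod ν))
    (hInt₆ : Integrable (fun θ => ptr θ * Real.log (p θ)) μ) :
    -- F(ψ,φ*) = F₁(ψ) − (−F₂(ψ)) − R(ψ) − ∫ p̃ᵣ log p
    -(∫ θ, ∫ x, ptr θ * qψ θ x * Real.log (p θ * psim θ x / tp x) ∂ν ∂μ) =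
      (∫ θ, ∫ x, ptr θ * qψ θ x *
          Real.log ((ptr θ * qψ θ x) / (ptr θ * psim θ x)) ∂ν ∂μ)
      - (∫ θ, ∫ x, ptr θ * qψ θ x *
          Real.log ((ptr θ * qψ θ x) / (ptr θ * tq x)) ∂ν ∂μ)
      - (∫ x, tq x * Real.log (tq x / tp x) ∂ν)
      - (∫ θ, ptr θ * Real.log (p θ) ∂μ) := by
  rcases eq_or_ne μ 0 with rfl | hμ
  · simp [htq]
  -- positivity of marginals
  have htq_pos : ∀ x, 0 < tq x := by
    intro x
    rw [htq x]
    refine (integral_pos_iff_support_of_nonneg (fun θ => ?_) (htq_int x)).2 ?_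
    · exact (mul_pos (hptr_pos θ) (hqψ_pos θ x)).le
    · have : Function.support (fun θ => ptr θ * qψ θ x) = Set.univ :=
        Set.eq_univ_of_forall fun θ => (mul_pos (hptr_pos θ) (hqψ_pos θ x)).ne'
      rw [this]
      simpa [pos_iff_ne_zero] using (Measure.measure_univ_ne_zero).2 hμ
  have htp_pos : ∀ x, 0 < tp x := by
    intro x
    rw [htp x]
    refine (integral_pos_iff_support_of_nonneg (fun θ => ?_) (htp_int x)).2 ?_
    · exact (mul_pos (hptr_pos θ) (hpsim_pos θ x)).le
    · have : Function.support (fun θ => ptr θ * psim θ x) = Set.univ :=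
        Set.eq_univ_of_forall fun θ => (mul_pos (hptr_pos θ) (hpsim_pos θ x)).ne'
      rw [this]
      simpa [pos_iff_ne_zero] using (Measure.measure_univ_ne_zero).2 hμ
  set I₁ := ∫ z : Θ × X, ptr z.1 * qψ z.1 z.2 * Real.log (psim z.1 z.2) ∂(μ.prod ν) with hI₁
  set I₂ := ∫ z : Θ × X, ptr z.1 * qψ z.1 z.2 * Real.log (qψ z.1 z.2) ∂(μ.prod ν) with hI₂
  set I₃ := ∫ z : Θ × X, ptr z.1 * qψ z.1 z.2 * Real.log (tq z.2) ∂(μ.prod ν) with hI₃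
  set I₄ := ∫ z : Θ × X, ptr z.1 * qψ z.1 z.2 * Real.log (tp z.2) ∂(μ.prod ν) with hI₄
  set I₅ := ∫ z : Θ × X, ptr z.1 * qψ z.1 z.2 * Real.log (p z.1) ∂(μ.prod ν) with hI₅
  -- LHS
  have e1 : ∀ θ x, ptr θ * qψ θ x * Real.log (p θ * psim θ x / tp x)
      = ptr θ * qψ θ x * Real.log (p θ) + ptr θ * qψ θ x * Real.log (psim θ x)
        - ptr θ * qψ θ x * Real.log (tp x) := by
    intro θ x
    rw [Real.log_div (mul_pos (hp_pos θ) (hpsim_pos θ x)).ne' (htp_pos x).ne',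
      Real.log_mul (hp_pos θ).ne' (hpsim_pos θ x).ne']
    ring
  have hL : (∫ θ, ∫ x, ptr θ * qψ θ x * Real.log (p θ * psim θ x / tp x) ∂ν ∂μ)
      = I₅ + I₁ - I₄ := by
    simp only [e1]
    have h51 : Integrable (fun z : Θ × X =>
        ptr z.1 * qψ z.1 z.2 * Real.log (p z.1)
          + ptr z.1 * qψ z.1 z.2 * Real.log (psim z.1 z.2)) (μ.prod ν) := hInt₅.add hInt₁
    rw [MeasureTheory.integral_integral (h51.sub hInt₄),
      integral_sub h51 hInt₄, integral_add hInt₅ hInt₁]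
  have e2 : ∀ θ x, ptr θ * qψ θ x * Real.log ((ptr θ * qψ θ x) / (ptr θ * psim θ x))
      = ptr θ * qψ θ x * Real.log (qψ θ x) - ptr θ * qψ θ x * Real.log (psim θ x) := by
    intro θ x
    rw [mul_div_mul_left _ _ (hptr_pos θ).ne',
      Real.log_div (hqψ_pos θ x).ne' (hpsim_pos θ x).ne']
    ring
  have hR1 : (∫ θ, ∫ x, ptr θ * qψ θ x *
      Real.log ((ptr θ * qψ θ x) / (ptr θ * psim θ x)) ∂ν ∂μ) = I₂ - I₁ := by
    simp only [e2]
    rw [MeasureTheory.integral_integral (hInt₂.sub hInt₁), integral_sub hInt₂ hInt₁]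
  have e3 : ∀ θ x, ptr θ * qψ θ x * Real.log ((ptr θ * qψ θ x) / (ptr θ * tq x))
      = ptr θ * qψ θ x * Real.log (qψ θ x) - ptr θ * qψ θ x * Real.log (tq x) := by
    intro θ x
    rw [mul_div_mul_left _ _ (hptr_pos θ).ne',
      Real.log_div (hqψ_pos θ x).ne' (htq_pos x).ne']
    ring
  have hR2 : (∫ θ, ∫ x, ptr θ * qψ θ x *
      Real.log ((ptr θ * qψ θ x) / (ptr θ * tq x)) ∂ν ∂μ) = I₂ - I₃ := by
    simp only [e3]
    rw [MeasureTheory.integral_integral (hInt₂.sub hInt₃), integral_sub hInt₂ hInt₃]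
  -- third term
  have e4 : ∀ x, tq x * Real.log (tq x / tp x)
      = ∫ θ, (ptr θ * qψ θ x * Real.log (tq x) - ptr θ * qψ θ x * Real.log (tp x)) ∂μ := by
    intro x
    rw [Real.log_div (htq_pos x).ne' (htp_pos x).ne']
    calc tq x * (Real.log (tq x) - Real.log (tp x))
        = (∫ θ, ptr θ * qψ θ x ∂μ) * (Real.log (tq x) - Real.log (tp x)) := by
          rw [htq x]
      _ = ∫ θ, ptr θ * qψ θ x * (Real.log (tq x) - Real.log (tp x)) ∂μ :=
          (integral_mul_const _ _).symm
      _ = ∫ θ, (ptr θ * qψ θ x * Real.log (tq x) - ptr θ * qψ θ x * Real.log (tp x)) ∂μ :=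
          integral_congr_ae (ae_of_all _ fun θ => by ring)
  have hR3 : (∫ x, tq x * Real.log (tq x / tp x) ∂ν) = I₃ - I₄ := by
    simp only [e4]
    rw [← MeasureTheory.integral_integral_swap (f := fun θ x =>
        ptr θ * qψ θ x * Real.log (tq x) - ptr θ * qψ θ x * Real.log (tp x))
        (hInt₃.sub hInt₄),
      MeasureTheory.integral_integral (hInt₃.sub hInt₄), integral_sub hInt₃ hInt₄]
  -- fourth term
  have e5 : ∀ θ, ptr θ * Real.log (p θ)
      = ∫ x, ptr θ * qψ θ x * Real.log (p θ) ∂ν := by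
    intro θ
    have : (fun x => ptr θ * qψ θ x * Real.log (p θ))
        = fun x => qψ θ x * (ptr θ * Real.log (p θ)) := by funext x; ring
    rw [this, integral_mul_const, hqψ_den θ, one_mul]
  have hR4 : (∫ θ, ptr θ * Real.log (p θ) ∂μ) = I₅ := by
    simp only [e5]
    exact MeasureTheory.integral_integral hInt₅
  rw [hL, hR1, hR2, hR3, hR4]
  ring
end

section
/- The minimizer of L_λ over strictly positive conditional probability densities, when it exists, is unique up to μ⊗ν-almost-everywhere equality: if q₁ and q₂ are both strictly positive conditional densities minimizing L_λ, then q₁(x|θ) = q₂(x|θ) for μ⊗ν-almost every (θ,x). -/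
open MeasureTheory Real

/-- The admissible class of conditional densities for the regularized loss: strictly
positive, jointly measurable, normalized in `x` for every `θ`, uniformly bounded above by
`M`, and such that the loss integrand is integrable (all integrals appearing are finite). -/
def NPRAdmissible {Θ X : Type*} [MeasurableSpace Θ] [MeasurableSpace X]
    (μ : Measure Θ) (ν : Measure X) (ptr : Θ → ℝ) (psim g : Θ → X → ℝ)
    (lam M : ℝ) (q : Θ → X → ℝ) : Prop :=
  Measurable (Function.uncurry q) ∧ (∀ θ x, 0 < q θ x) ∧ (∀ θ x, q θ x ≤ M) ∧
    (∀ θ, ∫ x, q θ x ∂ν = 1) ∧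
    Integrable (fun z : Θ × X =>
      ptr z.1 * (psim z.1 z.2 * Real.log (q z.1 z.2)
        + lam * q z.1 z.2 * g z.1 z.2)) (μ.prod ν)

/-- The regularized loss
`L_λ(q) = −∬ p̃ᵣ(θ) [p_sim(x|θ) log q(x|θ) + λ q(x|θ) g(θ,x)] dν(x) dμ(θ)`. -/
noncomputable def NPRLoss {Θ X : Type*} [MeasurableSpace Θ] [MeasurableSpace X]
    (μ : Measure Θ) (ν : Measure X) (ptr : Θ → ℝ) (psim g : Θ → X → ℝ)
    (lam : ℝ) (q : Θ → X → ℝ) : ℝ :=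
  -∫ θ, ∫ x, ptr θ * (psim θ x * Real.log (q θ x) + lam * q θ x * g θ x) ∂ν ∂μ

/-- The minimizer of `L_λ` over strictly positive conditional probability
densities is unique up to μ⊗ν-almost-everywhere equality: if `q₁` and `q₂` are both
strictly positive conditional densities minimizing `L_λ`, then `q₁(x|θ) = q₂(x|θ)` for
μ⊗ν-almost every `(θ,x)`. -/
theorem npr_minimizer_unique
    {Θ X : Type*} [MeasurableSpace Θ] [MeasurableSpace X]
    (μ : Measure Θ) (ν : Measure X) [SigmaFinite μ] [SigmaFinite ν]
    (ptr : Θ → ℝ) (psim g : Θ → X → ℝ) (lam M : ℝ) (hlam : 0 < lam)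
    -- p̃ᵣ is a strictly positive probability density, bounded below
    (hptr_meas : Measurable ptr) (hptr_pos : ∀ θ, 0 < ptr θ)
    (hptr_den : ∫ θ, ptr θ ∂μ = 1)
    (hptr_lb : ∃ δ : ℝ, 0 < δ ∧ ∀ θ, δ ≤ ptr θ)
    -- p_sim is a strictly positive conditional density, bounded above and below
    (hpsim_meas : Measurable (Function.uncurry psim))
    (hpsim_den : ∀ θ, ∫ x, psim θ x ∂ν = 1)
    (hpsim_bdd : ∃ a b : ℝ, 0 < a ∧ ∀ θ x, a ≤ psim θ x ∧ psim θ x ≤ b)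
    -- g is a bounded measurable function
    (hg_meas : Measurable (Function.uncurry g))
    (hg_bdd : ∃ G : ℝ, ∀ θ x, |g θ x| ≤ G)
    -- q₁ and q₂ are admissible minimizers
    (q₁ q₂ : Θ → X → ℝ)
    (hq₁ : NPRAdmissible μ ν ptr psim g lam M q₁)
    (hq₂ : NPRAdmissible μ ν ptr psim g lam M q₂)
    (hmin₁ : ∀ q : Θ → X → ℝ, NPRAdmissible μ ν ptr psim g lam M q →
      NPRLoss μ ν ptr psim g lam q₁ ≤ NPRLoss μ ν ptr psim g lam q)
    (hmin₂ : ∀ q : Θ → X → ℝ, NPRAdmissible μ ν ptr psim g lam M q →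
      NPRLoss μ ν ptr psim g lam q₂ ≤ NPRLoss μ ν ptr psim g lam q) :
    ∀ᵐ z : Θ × X ∂μ.prod ν, q₁ z.1 z.2 = q₂ z.1 z.2 := by
  classical
  obtain ⟨mq₁, pos₁, le₁, den₁, int₁⟩ := hq₁
  obtain ⟨mq₂, pos₂, le₂, den₂, int₂⟩ := hq₂
  obtain ⟨G, hG⟩ := hg_bdd
  obtain ⟨a, b, ha, hab⟩ := hpsim_bdd
  have hpsim_pos : ∀ θ x, 0 < psim θ x := fun θ x => lt_of_lt_of_le ha (hab θ x).1
  set G' : ℝ := max G 0 with hG'def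
  have hG'0 : (0:ℝ) ≤ G' := le_max_right _ _
  have hg' : ∀ θ x, |g θ x| ≤ G' := fun θ x => (hG θ x).trans (le_max_left _ _)
  -- ptr is integrable
  have hptr_int : Integrable ptr μ := by
    by_contra h
    rw [integral_undef h] at hptr_den
    norm_num at hptr_den
  -- sections of normalized densities are integrable
  have hsec : ∀ (q : Θ → X → ℝ), (∀ θ, ∫ x, q θ x ∂ν = 1) →
      ∀ θ, Integrable (q θ) ν := by
    intro q den θ
    by_contra h
    have h1 := den θ
    rw [integral_undef h] at h1
    norm_num at h1
  -- ptr ⊗ q is integrable on the product for normalized positive q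
  have hPQ : ∀ (q : Θ → X → ℝ), Measurable (Function.uncurry q) →
      (∀ θ x, 0 < q θ x) → (∀ θ, ∫ x, q θ x ∂ν = 1) →
      Integrable (fun z : Θ × X => ptr z.1 * q z.1 z.2) (μ.prod ν) := by
    intro q mq posq denq
    have mz : Measurable fun z : Θ × X => ptr z.1 * q z.1 z.2 :=
      (hptr_meas.comp measurable_fst).mul mq
    rw [integrable_prod_iff mz.aestronglyMeasurable]
    constructor
    · refine ae_of_all _ fun θ => ?_
      show Integrable (fun y => ptr θ * q θ y) ν
      exact (hsec q denq θ).const_mul (ptr θ)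
    · refine hptr_int.congr (ae_of_all _ fun θ => ?_)
      show ptr θ = ∫ x, ‖ptr θ * q θ x‖ ∂ν
      have h1 : ∫ x, ‖ptr θ * q θ x‖ ∂ν = ∫ x, ptr θ * q θ x ∂ν := by
        refine integral_congr_ae (ae_of_all _ fun x => ?_)
        show ‖ptr θ * q θ x‖ = ptr θ * q θ x
        rw [Real.norm_eq_abs, abs_of_nonneg (mul_nonneg (hptr_pos θ).le (posq θ x).le)]
      rw [h1, integral_const_mul, denq θ, mul_one]
  have hPS : Integrable (fun z : Θ × X => ptr z.1 * psim z.1 z.2) (μ.prod ν) :=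
    hPQ psim hpsim_meas hpsim_pos hpsim_den
  -- the linear ("B") part of the loss integrand is integrable
  have hB : ∀ (q : Θ → X → ℝ), Measurable (Function.uncurry q) →
      (∀ θ x, 0 < q θ x) → (∀ θ, ∫ x, q θ x ∂ν = 1) →
      Integrable (fun z : Θ × X => ptr z.1 * (lam * q z.1 z.2 * g z.1 z.2)) (μ.prod ν) := by
    intro q mq posq denq
    have hdom := ((hPQ q mq posq denq).const_mul (lam * G'))
    refine hdom.mono' ?_ (ae_of_all _ fun z => ?_)
    · exact ((hptr_meas.comp measurable_fst).mul
        (((measurable_const.mul mq)).mul hg_meas)).aestronglyMeasurable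
    · have h1 : ‖ptr z.1 * (lam * q z.1 z.2 * g z.1 z.2)‖
          = ptr z.1 * lam * q z.1 z.2 * |g z.1 z.2| := by
        rw [Real.norm_eq_abs, abs_mul, abs_mul, abs_mul,
          abs_of_nonneg (hptr_pos z.1).le, abs_of_nonneg hlam.le,
          abs_of_nonneg (posq z.1 z.2).le]
        ring
      rw [h1]
      have h2 : ptr z.1 * lam * q z.1 z.2 * |g z.1 z.2|
          ≤ ptr z.1 * lam * q z.1 z.2 * G' := by
        have hnn : 0 ≤ ptr z.1 * lam * q z.1 z.2 :=
          mul_nonneg (mul_nonneg (hptr_pos z.1).le hlam.le) (posq z.1 z.2).le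
        exact mul_le_mul_of_nonneg_left (hg' z.1 z.2) hnn
      calc ptr z.1 * lam * q z.1 z.2 * |g z.1 z.2|
          ≤ ptr z.1 * lam * q z.1 z.2 * G' := h2
        _ = lam * G' * (ptr z.1 * q z.1 z.2) := by ring
  -- the log ("A") part of the loss integrand is integrable for q₁, q₂
  have hA : ∀ (q : Θ → X → ℝ), Measurable (Function.uncurry q) →
      (∀ θ x, 0 < q θ x) → (∀ θ, ∫ x, q θ x ∂ν = 1) →
      Integrable (fun z : Θ × X =>
        ptr z.1 * (psim z.1 z.2 * Real.log (q z.1 z.2)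
          + lam * q z.1 z.2 * g z.1 z.2)) (μ.prod ν) →
      Integrable (fun z : Θ × X =>
        ptr z.1 * psim z.1 z.2 * Real.log (q z.1 z.2)) (μ.prod ν) := by
    intro q mq posq denq intq
    refine (intq.sub (hB q mq posq denq)).congr (ae_of_all _ fun z => ?_)
    simp only [Pi.sub_apply]
    ring
  have hA₁ := hA q₁ mq₁ pos₁ den₁ int₁
  have hA₂ := hA q₂ mq₂ pos₂ den₂ int₂
  have habs : ∀ (q : Θ → X → ℝ),
      Integrable (fun z : Θ × X =>
        ptr z.1 * psim z.1 z.2 * Real.log (q z.1 z.2)) (μ.prod ν) →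
      Integrable (fun z : Θ × X =>
        ptr z.1 * psim z.1 z.2 * |Real.log (q z.1 z.2)|) (μ.prod ν) := by
    intro q hq
    refine hq.abs.congr (ae_of_all _ fun z => ?_)
    show |ptr z.1 * psim z.1 z.2 * Real.log (q z.1 z.2)|
      = ptr z.1 * psim z.1 z.2 * |Real.log (q z.1 z.2)|
    rw [abs_mul, abs_mul, abs_of_nonneg (hptr_pos z.1).le,
      abs_of_nonneg (hpsim_pos z.1 z.2).le]
  have habs₁ := habs q₁ hA₁
  have habs₂ := habs q₂ hA₂
  -- the midpoint density
  set qm : Θ → X → ℝ := fun θ x => (q₁ θ x + q₂ θ x) / 2 with hqmdef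
  have mqm : Measurable (Function.uncurry qm) := (mq₁.add mq₂).div_const 2
  have posm : ∀ θ x, 0 < qm θ x := fun θ x => by
    have := pos₁ θ x; have := pos₂ θ x
    simp only [hqmdef]; positivity
  have lem : ∀ θ x, qm θ x ≤ M := fun θ x => by
    have := le₁ θ x; have := le₂ θ x
    simp only [hqmdef]; linarith
  have denm : ∀ θ, ∫ x, qm θ x ∂ν = 1 := by
    intro θ
    have h1 : ∫ x, qm θ x ∂ν = (∫ x, (q₁ θ x + q₂ θ x) ∂ν) / 2 := by
      simp only [hqmdef]
      rw [integral_div]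
    rw [h1, integral_add (hsec q₁ den₁ θ) (hsec q₂ den₂ θ), den₁ θ, den₂ θ]
    norm_num
  -- bound on |log qm|
  have hlogm : ∀ θ x, |Real.log (qm θ x)|
      ≤ |Real.log (q₁ θ x)| + |Real.log (q₂ θ x)| + Real.log 2 := by
    intro θ x
    have h1 := pos₁ θ x
    have h2 := pos₂ θ x
    have hlog2 : (0:ℝ) ≤ Real.log 2 := Real.log_nonneg (by norm_num)
    rw [abs_le]
    constructor
    · have hle : q₁ θ x / 2 ≤ qm θ x := by simp only [hqmdef]; linarith
      have h3 : Real.log (q₁ θ x / 2) ≤ Real.log (qm θ x) :=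
        Real.log_le_log (by positivity) hle
      rw [Real.log_div h1.ne' (by norm_num)] at h3
      have h4 : -|Real.log (q₁ θ x)| ≤ Real.log (q₁ θ x) := neg_abs_le _
      have h5 : (0:ℝ) ≤ |Real.log (q₂ θ x)| := abs_nonneg _
      linarith
    · rcases le_total (q₁ θ x) (q₂ θ x) with h | h
      · have hle : qm θ x ≤ q₂ θ x := by simp only [hqmdef]; linarith
        have h3 : Real.log (qm θ x) ≤ Real.log (q₂ θ x) :=
          Real.log_le_log (posm θ x) hle
        have h4 : Real.log (q₂ θ x) ≤ |Real.log (q₂ θ x)| := le_abs_self _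
        have h5 : (0:ℝ) ≤ |Real.log (q₁ θ x)| := abs_nonneg _
        linarith
      · have hle : qm θ x ≤ q₁ θ x := by simp only [hqmdef]; linarith
        have h3 : Real.log (qm θ x) ≤ Real.log (q₁ θ x) :=
          Real.log_le_log (posm θ x) hle
        have h4 : Real.log (q₁ θ x) ≤ |Real.log (q₁ θ x)| := le_abs_self _
        have h5 : (0:ℝ) ≤ |Real.log (q₂ θ x)| := abs_nonneg _
        linarith
  -- the A part for qm is integrable
  have hAm : Integrable (fun z : Θ × X =>
      ptr z.1 * psim z.1 z.2 * Real.log (qm z.1 z.2)) (μ.prod ν) := by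
    have hdom : Integrable (fun z : Θ × X =>
        ptr z.1 * psim z.1 z.2 * |Real.log (q₁ z.1 z.2)|
        + ptr z.1 * psim z.1 z.2 * |Real.log (q₂ z.1 z.2)|
        + Real.log 2 * (ptr z.1 * psim z.1 z.2)) (μ.prod ν) :=
      (habs₁.add habs₂).add (hPS.const_mul (Real.log 2))
    refine hdom.mono' ?_ (ae_of_all _ fun z => ?_)
    · exact (((hptr_meas.comp measurable_fst).mul hpsim_meas).mul
        (Real.measurable_log.comp mqm)).aestronglyMeasurable
    · have hnn : 0 ≤ ptr z.1 * psim z.1 z.2 :=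
        mul_nonneg (hptr_pos z.1).le (hpsim_pos z.1 z.2).le
      have h1 : ‖ptr z.1 * psim z.1 z.2 * Real.log (qm z.1 z.2)‖
          = ptr z.1 * psim z.1 z.2 * |Real.log (qm z.1 z.2)| := by
        rw [Real.norm_eq_abs, abs_mul, abs_mul, abs_of_nonneg (hptr_pos z.1).le,
          abs_of_nonneg (hpsim_pos z.1 z.2).le]
      rw [h1]
      have h2 := hlogm z.1 z.2
      nlinarith [mul_le_mul_of_nonneg_left h2 hnn]
  -- qm is admissible
  have intm : Integrable (fun z : Θ × X =>
      ptr z.1 * (psim z.1 z.2 * Real.log (qm z.1 z.2)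
        + lam * qm z.1 z.2 * g z.1 z.2)) (μ.prod ν) := by
    refine (hAm.add (hB qm mqm posm denm)).congr (ae_of_all _ fun z => ?_)
    simp only [Pi.add_apply, hqmdef]
    ring_nf
  have admm : NPRAdmissible μ ν ptr psim g lam M qm := ⟨mqm, posm, lem, denm, intm⟩
  -- express the loss as a product integral
  have hLoss : ∀ (q : Θ → X → ℝ),
      Integrable (fun z : Θ × X =>
        ptr z.1 * (psim z.1 z.2 * Real.log (q z.1 z.2)
          + lam * q z.1 z.2 * g z.1 z.2)) (μ.prod ν) →
      NPRLoss μ ν ptr psim g lam q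
        = -∫ z : Θ × X, ptr z.1 * (psim z.1 z.2 * Real.log (q z.1 z.2)
            + lam * q z.1 z.2 * g z.1 z.2) ∂(μ.prod ν) := by
    intro q hq
    simp only [NPRLoss]
    rw [integral_prod _ hq]
  have hL₁ := hLoss q₁ int₁
  have hL₂ := hLoss q₂ int₂
  have hLm := hLoss qm intm
  have hImin₁ : ∫ z : Θ × X, ptr z.1 * (psim z.1 z.2 * Real.log (qm z.1 z.2)
      + lam * qm z.1 z.2 * g z.1 z.2) ∂(μ.prod ν)
      ≤ ∫ z : Θ × X, ptr z.1 * (psim z.1 z.2 * Real.log (q₁ z.1 z.2)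
      + lam * q₁ z.1 z.2 * g z.1 z.2) ∂(μ.prod ν) := by
    have := hmin₁ qm admm
    rw [hL₁, hLm] at this
    linarith
  have hImin₂ : ∫ z : Θ × X, ptr z.1 * (psim z.1 z.2 * Real.log (qm z.1 z.2)
      + lam * qm z.1 z.2 * g z.1 z.2) ∂(μ.prod ν)
      ≤ ∫ z : Θ × X, ptr z.1 * (psim z.1 z.2 * Real.log (q₂ z.1 z.2)
      + lam * q₂ z.1 z.2 * g z.1 z.2) ∂(μ.prod ν) := by
    have := hmin₂ qm admm
    rw [hL₂, hLm] at this
    linarith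
  -- the deficit function
  set h : Θ × X → ℝ := fun z =>
    ptr z.1 * (psim z.1 z.2 * Real.log (q₁ z.1 z.2) + lam * q₁ z.1 z.2 * g z.1 z.2)
    + ptr z.1 * (psim z.1 z.2 * Real.log (q₂ z.1 z.2) + lam * q₂ z.1 z.2 * g z.1 z.2)
    - 2 * (ptr z.1 * (psim z.1 z.2 * Real.log (qm z.1 z.2)
        + lam * qm z.1 z.2 * g z.1 z.2)) with hhdef
  have hint : Integrable h (μ.prod ν) := (int₁.add int₂).sub (intm.const_mul 2)
  have hadd : Integrable (fun z : Θ × X =>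
      ptr z.1 * (psim z.1 z.2 * Real.log (q₁ z.1 z.2) + lam * q₁ z.1 z.2 * g z.1 z.2)
      + ptr z.1 * (psim z.1 z.2 * Real.log (q₂ z.1 z.2)
        + lam * q₂ z.1 z.2 * g z.1 z.2)) (μ.prod ν) := int₁.add int₂
  have hc2 : Integrable (fun z : Θ × X =>
      2 * (ptr z.1 * (psim z.1 z.2 * Real.log (qm z.1 z.2)
        + lam * qm z.1 z.2 * g z.1 z.2))) (μ.prod ν) := intm.const_mul 2
  have hIh : 0 ≤ ∫ z, h z ∂(μ.prod ν) := by
    have hIeq : ∫ z, h z ∂(μ.prod ν)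
        = (∫ z : Θ × X, ptr z.1 * (psim z.1 z.2 * Real.log (q₁ z.1 z.2)
            + lam * q₁ z.1 z.2 * g z.1 z.2) ∂(μ.prod ν))
          + (∫ z : Θ × X, ptr z.1 * (psim z.1 z.2 * Real.log (q₂ z.1 z.2)
            + lam * q₂ z.1 z.2 * g z.1 z.2) ∂(μ.prod ν))
          - 2 * ∫ z : Θ × X, ptr z.1 * (psim z.1 z.2 * Real.log (qm z.1 z.2)
            + lam * qm z.1 z.2 * g z.1 z.2) ∂(μ.prod ν) := by
      simp only [hhdef]
      rw [integral_sub hadd hc2, integral_add int₁ int₂, integral_const_mul]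
    rw [hIeq]
    linarith
  -- concavity: 2 log qm ≥ log q₁ + log q₂, with identification of h
  have hconc : ∀ θ x, Real.log (q₁ θ x) + Real.log (q₂ θ x)
      ≤ 2 * Real.log (qm θ x) := by
    intro θ x
    have h1 := pos₁ θ x
    have h2 := pos₂ θ x
    have hprod : q₁ θ x * q₂ θ x ≤ (qm θ x) ^ 2 := by
      simp only [hqmdef]
      nlinarith [sq_nonneg (q₁ θ x - q₂ θ x)]
    calc Real.log (q₁ θ x) + Real.log (q₂ θ x)
        = Real.log (q₁ θ x * q₂ θ x) := (Real.log_mul h1.ne' h2.ne').symm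
      _ ≤ Real.log ((qm θ x) ^ 2) := Real.log_le_log (by positivity) hprod
      _ = 2 * Real.log (qm θ x) := by
          rw [Real.log_pow]; norm_num
  have hform : ∀ z : Θ × X, h z = ptr z.1 * psim z.1 z.2
      * (Real.log (q₁ z.1 z.2) + Real.log (q₂ z.1 z.2)
        - 2 * Real.log (qm z.1 z.2)) := by
    intro z
    have hm : 2 * qm z.1 z.2 = q₁ z.1 z.2 + q₂ z.1 z.2 := by
      simp only [hqmdef]; ring
    simp only [hhdef]
    linear_combination (ptr z.1 * lam * g z.1 z.2) * hm
  have hle0 : ∀ z : Θ × X, h z ≤ 0 := by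
    intro z
    rw [hform z]
    have hnn : 0 ≤ ptr z.1 * psim z.1 z.2 :=
      mul_nonneg (hptr_pos z.1).le (hpsim_pos z.1 z.2).le
    have := hconc z.1 z.2
    nlinarith
  have hIzero : ∫ z, h z ∂(μ.prod ν) = 0 :=
    le_antisymm (integral_nonpos hle0) hIh
  have hae0 : (fun z => -h z) =ᵐ[μ.prod ν] 0 := by
    rw [← integral_eq_zero_iff_of_nonneg (fun z => neg_nonneg.2 (hle0 z)) hint.neg]
    rw [integral_neg, hIzero, neg_zero]
  filter_upwards [hae0] with z hz
  have hz0 : h z = 0 := by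
    have : -h z = 0 := hz
    linarith
  rw [hform z] at hz0
  have hpp : 0 < ptr z.1 * psim z.1 z.2 :=
    mul_pos (hptr_pos z.1) (hpsim_pos z.1 z.2)
  have heqlog : Real.log (q₁ z.1 z.2) + Real.log (q₂ z.1 z.2)
      = 2 * Real.log (qm z.1 z.2) := by
    rcases mul_eq_zero.1 hz0 with h | h
    · exact absurd h hpp.ne'
    · linarith
  by_contra hne
  have hstrict := strictConcaveOn_log_Ioi.2 (Set.mem_Ioi.2 (pos₁ z.1 z.2))
    (Set.mem_Ioi.2 (pos₂ z.1 z.2)) hne (by norm_num : (0:ℝ) < 1/2)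
    (by norm_num : (0:ℝ) < 1/2) (by norm_num)
  simp only [smul_eq_mul] at hstrict
  have hmix : (1/2 : ℝ) * q₁ z.1 z.2 + (1/2 : ℝ) * q₂ z.1 z.2 = qm z.1 z.2 := by
    simp only [hqmdef]; ring
  rw [hmix] at hstrict
  linarith
end

section
/- Let q be a strictly positive conditional probability density and let u : Θ × X → ℝ be a bounded measurable function with ∫ u(θ,x) dν(x) = 0 for every θ, such that q + εu remains strictly positive for all sufficiently small ε. Then the map ε ↦ L_λ(q + εu) is differentiable at ε = 0 with derivative d/dε|_{ε=0} L_λ(q + εu) = −∬ p̃ᵣ(θ) u(θ,x) ( p_sim(x|θ)/q(x|θ) + λ g(θ,x) ) dν(x) dμ(θ). -/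
open MeasureTheory Real

private lemma abs_log_le_log_two_aux {x : ℝ} (h1 : 1/2 ≤ x) (h2 : x ≤ 2) :
    |Real.log x| ≤ Real.log 2 := by
  have hx : 0 < x := by linarith
  rcases le_or_gt 1 x with h | h
  · rw [abs_of_nonneg (Real.log_nonneg h)]
    exact Real.log_le_log hx h2
  · rw [abs_of_neg (Real.log_neg hx h), ← Real.log_inv]
    have hxinv : x⁻¹ ≤ 2 := by
      rw [inv_le_comm₀ hx (by norm_num)]
      linarith
    exact Real.log_le_log (by positivity) hxinv

/-- For a strictly positive conditional probability density `q` (bounded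
below by a positive constant) and a bounded measurable perturbation `u` with
`∫ u(θ,x) dν(x) = 0` for every `θ`, such that `q + εu` remains strictly positive for all
sufficiently small `ε`, the map `ε ↦ L_λ(q + εu)` is differentiable at `ε = 0` with
derivative `−∬ p̃ᵣ(θ) u(θ,x) (p_sim(x|θ)/q(x|θ) + λ g(θ,x)) dν(x) dμ(θ)`. -/
theorem npr_loss_first_variation
    {Θ X : Type*} [MeasurableSpace Θ] [MeasurableSpace X]
    (μ : Measure Θ) (ν : Measure X) [SigmaFinite μ] [SigmaFinite ν]
    (ptr : Θ → ℝ) (psim g : Θ → X → ℝ) (lam : ℝ) (hlam : 0 < lam)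
    -- p̃ᵣ is a strictly positive probability density
    (hptr_meas : Measurable ptr) (hptr_pos : ∀ θ, 0 < ptr θ)
    (hptr_den : ∫ θ, ptr θ ∂μ = 1)
    -- p_sim is a strictly positive conditional probability density
    (hpsim_meas : Measurable (Function.uncurry psim))
    (hpsim_pos : ∀ θ x, 0 < psim θ x)
    (hpsim_den : ∀ θ, ∫ x, psim θ x ∂ν = 1)
    -- g is a bounded measurable function
    (hg_meas : Measurable (Function.uncurry g))
    (hg_bdd : ∃ G : ℝ, ∀ θ x, |g θ x| ≤ G)
    -- q is a strictly positive conditional probability density bounded below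
    (q : Θ → X → ℝ)
    (hq_meas : Measurable (Function.uncurry q))
    (hq_lb : ∃ δ : ℝ, 0 < δ ∧ ∀ θ x, δ ≤ q θ x)
    (hq_den : ∀ θ, ∫ x, q θ x ∂ν = 1)
    -- u is a bounded measurable perturbation with zero ν-mean in x for every θ
    (u : Θ → X → ℝ)
    (hu_meas : Measurable (Function.uncurry u))
    (hu_bdd : ∃ C : ℝ, ∀ θ x, |u θ x| ≤ C)
    (hu_mean : ∀ θ, ∫ x, u θ x ∂ν = 0)
    -- q + εu remains strictly positive for all sufficiently small ε
    (hpos : ∃ ε₀ : ℝ, 0 < ε₀ ∧ ∀ ε : ℝ, |ε| ≤ ε₀ → ∀ θ x, 0 < q θ x + ε * u θ x)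
    -- finiteness of all integrals appearing
    (hInt₁ : Integrable (fun z : Θ × X => ptr z.1 * psim z.1 z.2) (μ.prod ν))
    (hInt₂ : Integrable (fun z : Θ × X =>
      ptr z.1 * psim z.1 z.2 * Real.log (q z.1 z.2)) (μ.prod ν))
    (hInt₃ : Integrable (fun z : Θ × X =>
      ptr z.1 * q z.1 z.2 * g z.1 z.2) (μ.prod ν))
    (hInt₄ : Integrable (fun z : Θ × X =>
      ptr z.1 * u z.1 z.2 * g z.1 z.2) (μ.prod ν))
    (hInt₅ : Integrable (fun z : Θ × X =>
      ptr z.1 * u z.1 z.2 * (psim z.1 z.2 / q z.1 z.2 + lam * g z.1 z.2)) (μ.prod ν)) :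
    HasDerivAt
      (fun ε : ℝ => NPRLoss μ ν ptr psim g lam (fun θ x => q θ x + ε * u θ x))
      (-∫ θ, ∫ x, ptr θ * u θ x * (psim θ x / q θ x + lam * g θ x) ∂ν ∂μ) 0 := by
  obtain ⟨δ, hδ, hqδ⟩ := hq_lb
  obtain ⟨ε₀, hε₀, hposε⟩ := hpos
  obtain ⟨C₀, hC₀⟩ := hu_bdd
  set C : ℝ := max C₀ 0 with hCdef
  have hC : ∀ θ x, |u θ x| ≤ C := fun θ x => (hC₀ θ x).trans (le_max_left _ _)
  have hC0 : (0:ℝ) ≤ C := le_max_right _ _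
  -- measurability on the product space
  have mptr : Measurable fun z : Θ × X => ptr z.1 := hptr_meas.comp measurable_fst
  have mpsim : Measurable fun z : Θ × X => psim z.1 z.2 := hpsim_meas
  have mq : Measurable fun z : Θ × X => q z.1 z.2 := hq_meas
  have mu' : Measurable fun z : Θ × X => u z.1 z.2 := hu_meas
  have mg : Measurable fun z : Θ × X => g z.1 z.2 := hg_meas
  -- the radius
  set r : ℝ := min ε₀ (δ / (2 * (C + 1))) with hr
  have hrpos : 0 < r := lt_min hε₀ (by positivity)
  -- pointwise facts on the ball
  have hball : ∀ ε : ℝ, |ε| < r → ∀ θ x,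
      |ε * u θ x| ≤ δ/2 ∧ 0 < q θ x + ε * u θ x := by
    intro ε hε θ x
    have h1 : |ε| ≤ ε₀ := le_of_lt (lt_of_lt_of_le hε (min_le_left _ _))
    have h2 : |ε| ≤ δ / (2*(C+1)) := le_of_lt (lt_of_lt_of_le hε (min_le_right _ _))
    have habs : |ε * u θ x| ≤ δ/2 := by
      rw [abs_mul]
      calc |ε| * |u θ x| ≤ (δ/(2*(C+1))) * C :=
            mul_le_mul h2 (hC θ x) (abs_nonneg _) (by positivity)
        _ ≤ δ/2 := by
            rw [div_mul_eq_mul_div, div_le_div_iff₀ (by positivity) (by norm_num)]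
            nlinarith
    exact ⟨habs, hposε ε h1 θ x⟩
  -- the integrand and its derivative
  set F : ℝ → Θ × X → ℝ := fun ε z =>
    ptr z.1 * (psim z.1 z.2 * Real.log (q z.1 z.2 + ε * u z.1 z.2) +
      lam * (q z.1 z.2 + ε * u z.1 z.2) * g z.1 z.2) with hF
  set F' : ℝ → Θ × X → ℝ := fun ε z =>
    ptr z.1 * (psim z.1 z.2 * (u z.1 z.2 / (q z.1 z.2 + ε * u z.1 z.2)) +
      lam * u z.1 z.2 * g z.1 z.2) with hF'
  -- F ε is integrable for |ε| < r
  have hFint : ∀ ε : ℝ, |ε| < r → Integrable (F ε) (μ.prod ν) := by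
    intro ε hε
    have hmid : Integrable (fun z : Θ × X => ptr z.1 * psim z.1 z.2 *
        (Real.log (q z.1 z.2 + ε * u z.1 z.2) - Real.log (q z.1 z.2))) (μ.prod ν) := by
      refine (hInt₁.const_mul (Real.log 2)).mono'
        (((mptr.mul mpsim).mul
          (((mq.add (mu'.const_mul ε)).log).sub mq.log)).aestronglyMeasurable) ?_
      refine Filter.Eventually.of_forall fun z => ?_
      obtain ⟨habs, hposx⟩ := hball ε hε z.1 z.2
      have hq1 := hqδ z.1 z.2
      have hqpos : 0 < q z.1 z.2 := lt_of_lt_of_le hδ hq1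
      have hab := abs_le.mp habs
      have hlogeq : Real.log (q z.1 z.2 + ε * u z.1 z.2) - Real.log (q z.1 z.2)
          = Real.log ((q z.1 z.2 + ε * u z.1 z.2) / q z.1 z.2) :=
        (Real.log_div (ne_of_gt hposx) (ne_of_gt hqpos)).symm
      have hratio1 : 1/2 ≤ (q z.1 z.2 + ε * u z.1 z.2) / q z.1 z.2 := by
        rw [le_div_iff₀ hqpos]; linarith
      have hratio2 : (q z.1 z.2 + ε * u z.1 z.2) / q z.1 z.2 ≤ 2 := by
        rw [div_le_iff₀ hqpos]; linarith
      have hlogb := abs_log_le_log_two_aux hratio1 hratio2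
      have hpp : 0 ≤ ptr z.1 * psim z.1 z.2 :=
        le_of_lt (mul_pos (hptr_pos z.1) (hpsim_pos z.1 z.2))
      calc ‖ptr z.1 * psim z.1 z.2 *
            (Real.log (q z.1 z.2 + ε * u z.1 z.2) - Real.log (q z.1 z.2))‖
          = ptr z.1 * psim z.1 z.2 *
            |Real.log (q z.1 z.2 + ε * u z.1 z.2) - Real.log (q z.1 z.2)| := by
            rw [Real.norm_eq_abs, abs_mul, abs_of_nonneg hpp]
        _ ≤ ptr z.1 * psim z.1 z.2 * Real.log 2 := by
            rw [hlogeq]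
            exact mul_le_mul_of_nonneg_left hlogb hpp
        _ = Real.log 2 * (ptr z.1 * psim z.1 z.2) := by ring
    have hsum := (hInt₂.add hmid).add ((hInt₃.const_mul lam).add (hInt₄.const_mul (lam*ε)))
    exact hsum.congr (Filter.Eventually.of_forall fun z => by simp only [Pi.add_apply, hF]; ring)
  -- measurability of F ε and F' 0
  have hFmeas : ∀ ε : ℝ, AEStronglyMeasurable (F ε) (μ.prod ν) := fun ε =>
    (mptr.mul ((mpsim.mul ((mq.add (mu'.const_mul ε)).log)).add
      (((mq.add (mu'.const_mul ε)).const_mul lam).mul mg))).aestronglyMeasurable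
  have hF'meas : AEStronglyMeasurable (F' 0) (μ.prod ν) :=
    (mptr.mul ((mpsim.mul (mu'.div (mq.add (mu'.const_mul 0)))).add
      ((mu'.const_mul lam).mul mg))).aestronglyMeasurable
  -- the dominating function
  set bound : Θ × X → ℝ := fun z =>
    (C/(δ/2)) * (ptr z.1 * psim z.1 z.2) + lam * |ptr z.1 * u z.1 z.2 * g z.1 z.2|
    with hbounddef
  have hboundint : Integrable bound (μ.prod ν) :=
    (hInt₁.const_mul _).add (hInt₄.abs.const_mul lam)
  have h_bound : ∀ᵐ z ∂(μ.prod ν), ∀ ε ∈ Metric.ball (0:ℝ) r, ‖F' ε z‖ ≤ bound z := by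
    refine Filter.Eventually.of_forall fun z => fun ε hε => ?_
    have hεr : |ε| < r := by simpa [Real.dist_eq] using hε
    obtain ⟨habs, hposx⟩ := hball ε hεr z.1 z.2
    have hq1 := hqδ z.1 z.2
    have hab := abs_le.mp habs
    have hlow : δ/2 ≤ q z.1 z.2 + ε * u z.1 z.2 := by linarith
    have heq : F' ε z = ptr z.1 * psim z.1 z.2 * (u z.1 z.2 / (q z.1 z.2 + ε * u z.1 z.2))
        + lam * (ptr z.1 * u z.1 z.2 * g z.1 z.2) := by simp only [hF']; ring
    rw [Real.norm_eq_abs, heq]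
    refine (abs_add_le _ _).trans (add_le_add ?_ ?_)
    · have h1 : |ptr z.1 * psim z.1 z.2 * (u z.1 z.2 / (q z.1 z.2 + ε * u z.1 z.2))|
          = ptr z.1 * psim z.1 z.2 * (|u z.1 z.2| / (q z.1 z.2 + ε * u z.1 z.2)) := by
        rw [abs_mul, abs_mul, abs_div, abs_of_pos (hptr_pos z.1),
          abs_of_pos (hpsim_pos z.1 z.2), abs_of_pos hposx]
      rw [h1]
      calc ptr z.1 * psim z.1 z.2 * (|u z.1 z.2| / (q z.1 z.2 + ε * u z.1 z.2))
          ≤ ptr z.1 * psim z.1 z.2 * (C/(δ/2)) := by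
            refine mul_le_mul_of_nonneg_left
              (div_le_div₀ hC0 (hC z.1 z.2) (by linarith) hlow)
              (le_of_lt (mul_pos (hptr_pos z.1) (hpsim_pos z.1 z.2)))
        _ = (C/(δ/2)) * (ptr z.1 * psim z.1 z.2) := by ring
    · rw [abs_mul, abs_of_pos hlam]
  -- differentiability on the ball
  have h_diff : ∀ᵐ z ∂(μ.prod ν), ∀ ε ∈ Metric.ball (0:ℝ) r,
      HasDerivAt (fun t => F t z) (F' ε z) ε := by
    refine Filter.Eventually.of_forall fun z => fun ε hε => ?_
    have hεr : |ε| < r := by simpa [Real.dist_eq] using hε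
    obtain ⟨habs, hposx⟩ := hball ε hεr z.1 z.2
    have hlin : HasDerivAt (fun t : ℝ => q z.1 z.2 + t * u z.1 z.2) (u z.1 z.2) ε := by
      simpa using ((hasDerivAt_id ε).mul_const (u z.1 z.2)).const_add (q z.1 z.2)
    have hlog : HasDerivAt (fun t : ℝ => Real.log (q z.1 z.2 + t * u z.1 z.2))
        (u z.1 z.2 / (q z.1 z.2 + ε * u z.1 z.2)) ε := hlin.log (ne_of_gt hposx)
    have h1 := hlog.const_mul (psim z.1 z.2)
    have h2 := (hlin.const_mul lam).mul_const (g z.1 z.2)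
    exact (h1.add h2).const_mul (ptr z.1)
  -- apply dominated differentiation
  have key := hasDerivAt_integral_of_dominated_loc_of_deriv_le (Metric.ball_mem_nhds (0:ℝ) hrpos)
    (Filter.Eventually.of_forall hFmeas) (hFint 0 (by simpa using hrpos)) hF'meas
    h_bound hboundint h_diff
  -- identify the derivative value
  have hval : ∫ θ, ∫ x, ptr θ * u θ x * (psim θ x / q θ x + lam * g θ x) ∂ν ∂μ
      = ∫ z, F' 0 z ∂(μ.prod ν) := by
    rw [MeasureTheory.integral_integral hInt₅]
    refine integral_congr_ae (Filter.Eventually.of_forall fun z => ?_)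
    have hqpos : (0:ℝ) < q z.1 z.2 := lt_of_lt_of_le hδ (hqδ z.1 z.2)
    simp only [hF']
    simp only [zero_mul, add_zero, div_eq_mul_inv]
    ring
  rw [hval]
  have heq : (fun ε : ℝ => NPRLoss μ ν ptr psim g lam (fun θ x => q θ x + ε * u θ x))
      =ᶠ[nhds (0:ℝ)] (fun ε => -∫ z, F ε z ∂(μ.prod ν)) := by
    filter_upwards [Metric.ball_mem_nhds (0:ℝ) hrpos] with ε hε
    have hεr : |ε| < r := by simpa [Real.dist_eq] using hε
    simp only [NPRLoss]
    rw [MeasureTheory.integral_integral (hFint ε hεr)]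
  exact (key.2.neg).congr_of_eventuallyEq heq
end
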